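/- Let I ⊂ ℝ be an open interval and let φ : I → ℝ be twice continuously differentiable, not constant, and satisfy φ″(ξ) = (2/3)·φ(ξ)·φ′(ξ) for all ξ ∈ I. Then there exist constants c ∈ ℝ and A ≠ 0 such that on all of I one of the following holds: φ(ξ) = −3/(ξ − c), or φ(ξ) = A·tan((A/3)(ξ − c)), or φ(ξ) = −A·tanh((A/3)(ξ − c)), or φ(ξ) = −A·coth((A/3)(ξ − c)). -/

import Mathlib

open Set
/-- Derivative zero on a convex set gives a constant function. -/
lemma aux_const_of_deriv_zero {I : Set ℝ} (hIconv : Convex ℝ I) {f : ℝ → ℝ}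
    (h : ∀ x ∈ I, HasDerivAt f 0 x) {x y : ℝ} (hx : x ∈ I) (hy : y ∈ I) :
    f x = f y := by
  have := hIconv.norm_image_sub_le_of_norm_hasDerivWithin_le (C := 0) (f' := fun _ => (0:ℝ))
    (fun z hz => (h z hz).hasDerivWithinAt) (fun z hz => by simp) hx hy
  simp only [zero_mul] at this
  have := norm_le_zero_iff.1 (le_antisymm this (norm_nonneg _)).le
  linarith [sub_eq_zero.1 this]
lemma aux_lip (m M' : ℝ) (hM0 : 0 ≤ M') :
    LipschitzOnWith (Real.toNNReal (2 * M' / 3))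
      (fun x : ℝ => (x ^ 2 + m) / 3) (Icc (-M') M') := by
  rw [lipschitzOnWith_iff_dist_le_mul]
  intro x hx y hy
  have hx' : |x| ≤ M' := abs_le.2 ⟨hx.1, hx.2⟩
  have hy' : |y| ≤ M' := abs_le.2 ⟨hy.1, hy.2⟩
  simp only [Real.dist_eq, Real.coe_toNNReal _ (by positivity : (0:ℝ) ≤ 2 * M' / 3)]
  have he : (x ^ 2 + m) / 3 - (y ^ 2 + m) / 3 = (x + y) / 3 * (x - y) := by ring
  rw [he, abs_mul, abs_div]
  have h1 : |x + y| ≤ 2 * M' := (abs_add_le x y).trans (by linarith)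
  have h3 : |(3:ℝ)| = 3 := by norm_num
  rw [h3]
  gcongr

/-- Uniqueness vs a constant solution for `f' = (f² + m)/3`. -/
lemma aux_ode_const {I : Set ℝ} (hIconv : Convex ℝ I) {φ : ℝ → ℝ} {m b : ℝ}
    (hb : (b ^ 2 + m) / 3 = 0)
    (hd : ∀ ξ ∈ I, HasDerivAt φ ((φ ξ ^ 2 + m) / 3) ξ)
    (hcont : ContinuousOn φ I)
    {ξ₀ : ℝ} (hξ₀ : ξ₀ ∈ I) (h0 : φ ξ₀ = b) :
    ∀ ξ ∈ I, φ ξ = b := by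
  intro ξ hξ
  rcases le_total ξ₀ ξ with hle | hle
  · have hsub : Icc ξ₀ ξ ⊆ I := hIconv.ordConnected.out hξ₀ hξ
    obtain ⟨M, hM⟩ : ∃ M, ∀ t ∈ Icc ξ₀ ξ, |φ t| ≤ M := by
      obtain ⟨M, hM⟩ := (isCompact_Icc).exists_bound_of_continuousOn (hcont.mono hsub)
      exact ⟨M, fun t ht => by simpa using hM t ht⟩
    set M' := max M |b| with hM'
    have hM0 : (0:ℝ) ≤ M' := le_trans (abs_nonneg b) (le_max_right _ _)
    have hmem : ∀ x : ℝ, |x| ≤ M' → x ∈ Icc (-M') M' := fun x hx =>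
      ⟨neg_le_of_abs_le hx, (abs_le.1 hx).2⟩
    have := ODE_solution_unique_of_mem_Icc_right (v := fun _ x => (x ^ 2 + m) / 3)
      (s := fun _ => Icc (-M') M') (fun _ _ => aux_lip m M' hM0)
      (hcont.mono hsub)
      (fun t ht => ((hd t (hsub (Ico_subset_Icc_self ht))).hasDerivWithinAt))
      (fun t ht => hmem _ ((hM t (Ico_subset_Icc_self ht)).trans (le_max_left _ _)))
      (continuousOn_const : ContinuousOn (fun _ => b) (Icc ξ₀ ξ))
      (fun t ht => by simpa [hb] using (hasDerivWithinAt_const t (Ici t) b))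
      (fun t ht => hmem _ (le_max_right M |b|))
      h0
    exact this ⟨hle, le_rfl⟩
  · have hsub : Icc ξ ξ₀ ⊆ I := hIconv.ordConnected.out hξ hξ₀
    obtain ⟨M, hM⟩ : ∃ M, ∀ t ∈ Icc ξ ξ₀, |φ t| ≤ M := by
      obtain ⟨M, hM⟩ := (isCompact_Icc).exists_bound_of_continuousOn (hcont.mono hsub)
      exact ⟨M, fun t ht => by simpa using hM t ht⟩
    set M' := max M |b| with hM'
    have hM0 : (0:ℝ) ≤ M' := le_trans (abs_nonneg b) (le_max_right _ _)
    have hmem : ∀ x : ℝ, |x| ≤ M' → x ∈ Icc (-M') M' := fun x hx =>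
      ⟨neg_le_of_abs_le hx, (abs_le.1 hx).2⟩
    have := ODE_solution_unique_of_mem_Icc_left (v := fun _ x => (x ^ 2 + m) / 3)
      (s := fun _ => Icc (-M') M') (fun _ _ => aux_lip m M' hM0)
      (hcont.mono hsub)
      (fun t ht => ((hd t (hsub (Ioc_subset_Icc_self ht))).hasDerivWithinAt))
      (fun t ht => hmem _ ((hM t (Ioc_subset_Icc_self ht)).trans (le_max_left _ _)))
      (continuousOn_const : ContinuousOn (fun _ => b) (Icc ξ ξ₀))
      (fun t ht => by simpa [hb] using (hasDerivWithinAt_const t (Iic t) b))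
      (fun t ht => hmem _ (le_max_right M |b|))
      h0
    exact this ⟨le_rfl, hle⟩

/-- Classification of the non-constant solutions of `φ″ = (2/3)·φ·φ′` on an open
interval: they are of rational, tangent, hyperbolic-tangent or
hyperbolic-cotangent type (the ODE underlying the classification of solitons of
the fully affine heat flow, Theorem 1.2). -/
theorem soliton_curvature_classification
    (I : Set ℝ) (hIopen : IsOpen I) (hIconv : Convex ℝ I)
    (φ : ℝ → ℝ) (hφ : ContDiffOn ℝ 2 φ I)
    (hnc : ∃ ξ ∈ I, ∃ η ∈ I, φ ξ ≠ φ η)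
    (hode : ∀ ξ ∈ I, iteratedDeriv 2 φ ξ = 2 / 3 * φ ξ * deriv φ ξ) :
    ∃ c A : ℝ, A ≠ 0 ∧
      ((∀ ξ ∈ I, φ ξ = -3 / (ξ - c)) ∨
       (∀ ξ ∈ I, φ ξ = A * Real.tan (A / 3 * (ξ - c))) ∨
       (∀ ξ ∈ I, φ ξ = -A * Real.tanh (A / 3 * (ξ - c))) ∨
       (∀ ξ ∈ I, φ ξ = -A *
          (Real.cosh (A / 3 * (ξ - c)) / Real.sinh (A / 3 * (ξ - c))))) := by
  obtain ⟨ξa, hξa, ξb, hξb, hab⟩ := hnc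
  have hcont : ContinuousOn φ I := hφ.continuousOn
  have hdiff : ∀ ξ ∈ I, HasDerivAt φ (deriv φ ξ) ξ := fun ξ hξ =>
    ((hφ.differentiableOn (by norm_num)).differentiableAt (hIopen.mem_nhds hξ)).hasDerivAt
  have hd2 : ContDiffOn ℝ 1 (deriv φ) I := hφ.deriv_of_isOpen hIopen (by norm_num)
  have hdd : ∀ ξ ∈ I, HasDerivAt (deriv φ) (deriv (deriv φ) ξ) ξ := fun ξ hξ =>
    ((hd2.differentiableOn (by norm_num)).differentiableAt (hIopen.mem_nhds hξ)).hasDerivAt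
  have hode' : ∀ ξ ∈ I, deriv (deriv φ) ξ = 2 / 3 * φ ξ * deriv φ ξ := by
    intro ξ hξ
    have := hode ξ hξ
    rwa [iteratedDeriv_succ, iteratedDeriv_one] at this
  have hg : ∀ ξ ∈ I, HasDerivAt (fun ξ => deriv φ ξ - (φ ξ) ^ 2 / 3) 0 ξ := by
    intro ξ hξ
    have h2 : HasDerivAt (fun ξ => (φ ξ) ^ 2 / 3)
        ((2 : ℕ) * φ ξ ^ (2 - 1) * deriv φ ξ / 3) ξ := ((hdiff ξ hξ).pow 2).div_const 3
    have h3 := (hdd ξ hξ).sub h2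
    convert h3 using 1
    · rfl
    · rfl
    · rfl
    rw [hode' ξ hξ]
    push_cast
    ring
  set m := 3 * (deriv φ ξa - (φ ξa) ^ 2 / 3) with hm
  have hd : ∀ ξ ∈ I, HasDerivAt φ ((φ ξ ^ 2 + m) / 3) ξ := by
    intro ξ hξ
    have e := aux_const_of_deriv_zero hIconv hg hξ hξa
    have : deriv φ ξ = (φ ξ ^ 2 + m) / 3 := by rw [hm]; linarith
    rw [← this]; exact hdiff ξ hξ
  rcases lt_trichotomy m 0 with hm0 | hm0 | hm0
  · -- m < 0 : tanh / coth cases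
    set A := Real.sqrt (-m) with hA
    have hA0 : 0 < A := Real.sqrt_pos.2 (by linarith)
    have hA2 : A ^ 2 = -m := Real.sq_sqrt (by linarith)
    have hm2 : m = -A ^ 2 := by linarith
    have hneA : ∀ ξ ∈ I, φ ξ ≠ A ∧ φ ξ ≠ -A := by
      intro ξ hξ
      constructor <;> intro h0
      · have := aux_ode_const hIconv (b := A) (by rw [hm2]; ring) hd hcont hξ h0
        exact hab ((this ξa hξa).trans (this ξb hξb).symm)
      · have := aux_ode_const hIconv (b := -A) (by rw [hm2]; ring) hd hcont hξ h0
        exact hab ((this ξa hξa).trans (this ξb hξb).symm)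
    have hdich : (∀ ξ ∈ I, φ ξ ^ 2 < A ^ 2) ∨ (∀ ξ ∈ I, A ^ 2 < φ ξ ^ 2) := by
      set u := {x : ℝ | x ∈ I ∧ φ x ^ 2 < A ^ 2} with hu'
      set v := {x : ℝ | x ∈ I ∧ A ^ 2 < φ x ^ 2} with hv'
      have hu : IsOpen u := by
        rw [isOpen_iff_mem_nhds]
        rintro x ⟨hxI, hx⟩
        have hc : ContinuousAt (fun y => φ y ^ 2) x :=
          (hcont.continuousAt (hIopen.mem_nhds hxI)).pow 2
        filter_upwards [hc.preimage_mem_nhds (Iio_mem_nhds hx), hIopen.mem_nhds hxI]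
          with y h1 h2
        exact ⟨h2, h1⟩
      have hv : IsOpen v := by
        rw [isOpen_iff_mem_nhds]
        rintro x ⟨hxI, hx⟩
        have hc : ContinuousAt (fun y => φ y ^ 2) x :=
          (hcont.continuousAt (hIopen.mem_nhds hxI)).pow 2
        filter_upwards [hc.preimage_mem_nhds (Ioi_mem_nhds hx), hIopen.mem_nhds hxI]
          with y h1 h2
        exact ⟨h2, h1⟩
      have hcover : I ⊆ u ∪ v := by
        intro x hx
        rcases lt_trichotomy (φ x ^ 2) (A ^ 2) with h | h | h
        · exact Or.inl ⟨hx, h⟩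
        · exfalso
          have h3 : (φ x - A) * (φ x + A) = 0 := by nlinarith
          rcases mul_eq_zero.1 h3 with h4 | h4
          · exact (hneA x hx).1 (by linarith)
          · exact (hneA x hx).2 (by linarith)
        · exact Or.inr ⟨hx, h⟩
      have hdisj : Disjoint u v := by
        rw [Set.disjoint_left]
        rintro x ⟨_, h1⟩ ⟨_, h2⟩
        linarith
      rcases (hIconv.isPreconnected).subset_or_subset hu hv hdisj hcover with h | h
      · exact Or.inl fun ξ hξ => (h hξ).2
      · exact Or.inr fun ξ hξ => (h hξ).2
    rcases hdich with hlt | hgt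
    · -- |φ| < A : tanh case
      have hpos1 : ∀ ξ ∈ I, 0 < A + φ ξ := fun ξ hξ => by nlinarith [hlt ξ hξ]
      have hpos2 : ∀ ξ ∈ I, 0 < A - φ ξ := fun ξ hξ => by nlinarith [hlt ξ hξ]
      have hh : ∀ ξ ∈ I, HasDerivAt
          (fun ξ => Real.log (A + φ ξ) - Real.log (A - φ ξ) + 2 * A / 3 * ξ) 0 ξ := by
        intro ξ hξ
        have h1 : HasDerivAt (fun ξ => A + φ ξ) ((φ ξ ^ 2 + m) / 3) ξ := by
          exact (hd ξ hξ).const_add A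
        have h2 : HasDerivAt (fun ξ => A - φ ξ) (-((φ ξ ^ 2 + m) / 3)) ξ := by
          exact (hd ξ hξ).const_sub A
        have h1' := h1.log (hpos1 ξ hξ).ne'
        have h2' := h2.log (hpos2 ξ hξ).ne'
        have h3 := (h1'.sub h2').add ((hasDerivAt_id ξ).const_mul (2 * A / 3))
        convert h3 using 1
        · rfl
        · rfl
        · rfl
        rw [hm2]
        have e1 := (hpos1 ξ hξ).ne'
        have e2 := (hpos2 ξ hξ).ne'
        field_simp
        ring
      refine ⟨3 / (2 * A) * (Real.log (A + φ ξa) - Real.log (A - φ ξa) + 2 * A / 3 * ξa),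
        A, hA0.ne', Or.inr (Or.inr (Or.inl ?_))⟩
      intro ξ hξ
      have e := aux_const_of_deriv_zero hIconv hh hξ hξa
      set D := Real.log (A + φ ξa) - Real.log (A - φ ξa) + 2 * A / 3 * ξa with hD
      set c := 3 / (2 * A) * D with hc
      set s := A / 3 * (ξ - c) with hs
      have elog : Real.log (A + φ ξ) - Real.log (A - φ ξ) = -2 * s := by
        have key : 2 * A / 3 * (3 / (2 * A)) = 1 := by field_simp
        have expand : -2 * (A / 3 * (ξ - 3 / (2 * A) * D))
            = -(2 * A / 3 * ξ) + (2 * A / 3 * (3 / (2 * A))) * D := by ring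
        rw [hs, hc, expand, key, one_mul]
        linarith
      set P := Real.exp s with hP
      set Q := Real.exp (-s) with hQ
      have hPQ : P * Q = 1 := by rw [hP, hQ, ← Real.exp_add]; simp
      have hE : (A + φ ξ) / (A - φ ξ) = Q * Q := by
        have l1 : Real.log ((A + φ ξ) / (A - φ ξ)) = -2 * s := by
          rw [Real.log_div (hpos1 ξ hξ).ne' (hpos2 ξ hξ).ne']
          exact elog
        have l2 := congrArg Real.exp l1
        rw [Real.exp_log (div_pos (hpos1 ξ hξ) (hpos2 ξ hξ))] at l2
        rw [l2, show (-2 : ℝ) * s = -s + -s by ring, Real.exp_add]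
      have hrel : A + φ ξ = Q * Q * (A - φ ξ) := (div_eq_iff (hpos2 ξ hξ).ne').1 hE
      have hPQpos : (0 : ℝ) < P + Q := by rw [hP, hQ]; positivity
      have final : φ ξ * (P + Q) = -A * (P - Q) := by
        linear_combination P * hrel + (A - φ ξ) * Q * hPQ
      rw [Real.tanh_eq_sinh_div_cosh, Real.sinh_eq, Real.cosh_eq]
      have simp1 : (P - Q) / 2 / ((P + Q) / 2) = (P - Q) / (P + Q) := by
        field_simp [hPQpos.ne']
      rw [simp1, ← mul_div_assoc, eq_div_iff hPQpos.ne']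
      linarith [final]
    · -- |φ| > A : coth case
      have hprod : ∀ ξ ∈ I, 0 < (φ ξ + A) * (φ ξ - A) := fun ξ hξ => by
        nlinarith [hgt ξ hξ]
      have hne1 : ∀ ξ ∈ I, φ ξ + A ≠ 0 := fun ξ hξ =>
        (mul_ne_zero_iff.1 (hprod ξ hξ).ne').1
      have hne2 : ∀ ξ ∈ I, φ ξ - A ≠ 0 := fun ξ hξ =>
        (mul_ne_zero_iff.1 (hprod ξ hξ).ne').2
      have hh : ∀ ξ ∈ I, HasDerivAt
          (fun ξ => Real.log (φ ξ + A) - Real.log (φ ξ - A) + 2 * A / 3 * ξ) 0 ξ := by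
        intro ξ hξ
        have h1 : HasDerivAt (fun ξ => φ ξ + A) ((φ ξ ^ 2 + m) / 3) ξ :=
          (hd ξ hξ).add_const A
        have h2 : HasDerivAt (fun ξ => φ ξ - A) ((φ ξ ^ 2 + m) / 3) ξ :=
          (hd ξ hξ).sub_const A
        have h1' := h1.log (hne1 ξ hξ)
        have h2' := h2.log (hne2 ξ hξ)
        have h3 := (h1'.sub h2').add ((hasDerivAt_id ξ).const_mul (2 * A / 3))
        convert h3 using 1
        · rfl
        · rfl
        · rfl
        rw [hm2]
        have e1 := hne1 ξ hξ
        have e2 := hne2 ξ hξ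
        field_simp
        ring
      refine ⟨3 / (2 * A) * (Real.log (φ ξa + A) - Real.log (φ ξa - A) + 2 * A / 3 * ξa),
        A, hA0.ne', Or.inr (Or.inr (Or.inr ?_))⟩
      intro ξ hξ
      have e := aux_const_of_deriv_zero hIconv hh hξ hξa
      set D := Real.log (φ ξa + A) - Real.log (φ ξa - A) + 2 * A / 3 * ξa with hD
      set c := 3 / (2 * A) * D with hc
      set s := A / 3 * (ξ - c) with hs
      have elog : Real.log (φ ξ + A) - Real.log (φ ξ - A) = -2 * s := by
        have key : 2 * A / 3 * (3 / (2 * A)) = 1 := by field_simp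
        have expand : -2 * (A / 3 * (ξ - 3 / (2 * A) * D))
            = -(2 * A / 3 * ξ) + (2 * A / 3 * (3 / (2 * A))) * D := by ring
        rw [hs, hc, expand, key, one_mul]
        linarith
      set P := Real.exp s with hP
      set Q := Real.exp (-s) with hQ
      have hPQ : P * Q = 1 := by rw [hP, hQ, ← Real.exp_add]; simp
      have hratio : 0 < (φ ξ + A) / (φ ξ - A) := div_pos_iff.2 (mul_pos_iff.1 (hprod ξ hξ))
      have hE : (φ ξ + A) / (φ ξ - A) = Q * Q := by
        have l1 : Real.log ((φ ξ + A) / (φ ξ - A)) = -2 * s := by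
          rw [Real.log_div (hne1 ξ hξ) (hne2 ξ hξ)]
          exact elog
        have l2 := congrArg Real.exp l1
        rw [Real.exp_log hratio] at l2
        rw [l2, show (-2 : ℝ) * s = -s + -s by ring, Real.exp_add]
      have hrel : φ ξ + A = Q * Q * (φ ξ - A) := (div_eq_iff (hne2 ξ hξ)).1 hE
      have hPQne : P - Q ≠ 0 := by
        intro h0
        have hq : P = Q := by linarith
        rw [hq] at hPQ
        have : φ ξ + A = φ ξ - A := by rw [hrel, hPQ, one_mul]
        linarith
      have final : φ ξ * (P - Q) = -A * (P + Q) := by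
        linear_combination P * hrel + (φ ξ - A) * Q * hPQ
      rw [Real.cosh_eq, Real.sinh_eq]
      have simp1 : (P + Q) / 2 / ((P - Q) / 2) = (P + Q) / (P - Q) := by
        field_simp [hPQne]
      rw [simp1, ← mul_div_assoc, eq_div_iff hPQne]
      linarith [final]
  · -- m = 0 : rational case
    have hne : ∀ ξ ∈ I, φ ξ ≠ 0 := by
      intro ξ hξ h0
      have := aux_ode_const hIconv (b := 0) (by rw [hm0]; norm_num) hd hcont hξ h0
      exact hab ((this ξa hξa).trans (this ξb hξb).symm)
    have hh : ∀ ξ ∈ I, HasDerivAt (fun ξ => -3 / φ ξ - ξ) 0 ξ := by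
      intro ξ hξ
      have h1 := (hasDerivAt_const ξ (-3 : ℝ)).div (hd ξ hξ) (hne ξ hξ)
      have h2 := h1.sub (hasDerivAt_id ξ)
      convert h2 using 1
      · rfl
      · rfl
      · rfl
      rw [hm0]
      have := hne ξ hξ
      field_simp
      ring
    refine ⟨ξa + 3 / φ ξa, 1, one_ne_zero, Or.inl ?_⟩
    intro ξ hξ
    have e := aux_const_of_deriv_zero hIconv hh hξ hξa
    have hnz : φ ξ ≠ 0 := hne ξ hξ
    have e2 : ξ - (ξa + 3 / φ ξa) = -3 / φ ξ := by
      have h3 : (-3 : ℝ) / φ ξa = -(3 / φ ξa) := by ring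
      rw [h3] at e
      linarith
    rw [e2]
    field_simp
  · -- m > 0 : tan case
    set A := Real.sqrt m with hA
    have hA0 : 0 < A := Real.sqrt_pos.2 hm0
    have hA2 : A ^ 2 = m := Real.sq_sqrt hm0.le
    have hh : ∀ ξ ∈ I, HasDerivAt (fun ξ => Real.arctan (φ ξ / A) - A / 3 * ξ) 0 ξ := by
      intro ξ hξ
      have h1 : HasDerivAt (fun ξ => Real.arctan (φ ξ / A))
          (1 / (1 + (φ ξ / A) ^ 2) * ((φ ξ ^ 2 + m) / 3 / A)) ξ :=
        by exact (Real.hasDerivAt_arctan (φ ξ / A)).comp ξ ((hd ξ hξ).div_const A)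
      have h2 := h1.sub ((hasDerivAt_id ξ).const_mul (A / 3))
      convert h2 using 1
      · rfl
      · rfl
      · rfl
      rw [← hA2]
      have h4 : A ^ 2 + φ ξ ^ 2 > 0 := by positivity
      field_simp
      ring
    refine ⟨ξa - 3 / A * Real.arctan (φ ξa / A), A, hA0.ne', Or.inr (Or.inl ?_)⟩
    intro ξ hξ
    have e := aux_const_of_deriv_zero hIconv hh hξ hξa
    have e2 : Real.arctan (φ ξ / A) = A / 3 * (ξ - (ξa - 3 / A * Real.arctan (φ ξa / A))) := by
      have key : A / 3 * (3 / A) = 1 := by field_simp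
      have expand : A / 3 * (ξ - (ξa - 3 / A * Real.arctan (φ ξa / A)))
          = A / 3 * ξ - A / 3 * ξa + (A / 3 * (3 / A)) * Real.arctan (φ ξa / A) := by ring
      rw [expand, key, one_mul]
      linarith
    have e3 := Real.tan_arctan (φ ξ / A)
    rw [e2] at e3
    rw [e3]
    field_simp
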